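/- Let G = G₁ ⊗ G₂ be the join of two finite simple graphs, let k be a positive integer, and let f_s, f_t be extended k-colorings of G with |f_s⁻¹(c)| = |f_t⁻¹(c)| for every c ∈ {1,…,k} ∪ {∗} (a valid instance). Suppose that the sets of swappable colors of both restrictions f_s¹ (to V(G₁)) and f_s² (to V(G₂)) are non-empty. For j ∈ {1,2}, define extended k-colorings f^j_{s∗} and f^j_{t∗} of G_j by f^j_{s∗}(v) = ∗ if f_s(v) ∈ S_{f_s} and f^j_{s∗}(v) = f_s(v) otherwise, and f^j_{t∗}(v) = ∗ if f_t(v) ∈ S_{f_t} and f^j_{t∗}(v) = f_t(v) otherwise, for v ∈ V(G_j). Then f_s and f_t are reconfigurable under color swapping in G if and only if f¹_{s∗} and f¹_{t∗} are reconfigurable in G₁ and f²_{s∗} and f²_{t∗} are reconfigurable in G₂. -/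

import Mathlib

/-- An extended `k`-coloring of `G`: a map `V → {1,…,k} ∪ {∗}` (with `∗ = none`)
such that adjacent vertices get different colors unless both get `∗`. -/
def IsExtColoring {V : Type*} (G : SimpleGraph V) (k : ℕ) (f : V → Option ℕ) : Prop :=
  (∀ v i, f v = some i → i ∈ Finset.Icc 1 k) ∧
    ∀ ⦃u w : V⦄, G.Adj u w → f u = f w → f u = none

/-- Two extended colorings are adjacent under color swapping: there is an edge
`uw` whose endpoint colors are exchanged, all other vertices keep their color,
and the two colorings are distinct. -/
def ExtCSAdj {V : Type*} (G : SimpleGraph V) (f f' : V → Option ℕ) : Prop :=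
  f ≠ f' ∧ ∃ u w : V, G.Adj u w ∧ f u = f' w ∧ f w = f' u ∧
    ∀ x : V, x ≠ u → x ≠ w → f x = f' x

/-- One step of color-swapping reconfiguration between extended `k`-colorings. -/
def ExtCSStep {V : Type*} (G : SimpleGraph V) (k : ℕ) (f f' : V → Option ℕ) : Prop :=
  IsExtColoring G k f ∧ IsExtColoring G k f' ∧ ExtCSAdj G f f'

/-- Two extended `k`-colorings are reconfigurable under color swapping. -/
def ExtReconf {V : Type*} (G : SimpleGraph V) (k : ℕ) :
    (V → Option ℕ) → (V → Option ℕ) → Prop :=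
  Relation.ReflTransGen (ExtCSStep G k)

/-- The set of swappable colors of an extended coloring `f`: the colors used by
exactly one vertex, together with `∗` whenever some vertex is colored `∗`. -/
def swappableSet {V : Type*} (f : V → Option ℕ) : Set (Option ℕ) :=
  {c | (∃! v, f v = c) ∨ (c = none ∧ ∃ v, f v = none)}

/-- The disjoint union `G₁ ⊕ G₂`. -/
def graphSum {V₁ V₂ : Type*} (G₁ : SimpleGraph V₁) (G₂ : SimpleGraph V₂) :
    SimpleGraph (V₁ ⊕ V₂) :=
  SimpleGraph.fromRel (fun x y =>
    match x, y with
    | Sum.inl u, Sum.inl v => G₁.Adj u v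
    | Sum.inr u, Sum.inr v => G₂.Adj u v
    | _, _ => False)

/-- The join `G₁ ⊗ G₂`: the disjoint union together with all edges between the
two sides. -/
def graphJoin {V₁ V₂ : Type*} (G₁ : SimpleGraph V₁) (G₂ : SimpleGraph V₂) :
    SimpleGraph (V₁ ⊕ V₂) :=
  SimpleGraph.fromRel (fun x y =>
    match x, y with
    | Sum.inl u, Sum.inl v => G₁.Adj u v
    | Sum.inr u, Sum.inr v => G₂.Adj u v
    | Sum.inl _, Sum.inr _ => True
    | Sum.inr _, Sum.inl _ => False)

open scoped Classical in
/-- Replace every color lying in the set `C` of swappable colors by `∗`. -/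
noncomputable def starMask {W : Type*} (C : Set (Option ℕ)) (f : W → Option ℕ) :
    W → Option ℕ :=
  fun v => if f v ∈ C then none else f v

open Finset Sum
open scoped Classical
set_option linter.unusedSectionVars false

section Counting

variable {V : Type*} [Fintype V]

/-- Number of vertices with color `c`. -/
def cnt (f : V → Option ℕ) (c : Option ℕ) : ℕ :=
  (Finset.univ.filter fun v => f v = c).card

lemma cnt_comp_perm (f : V → Option ℕ) (σ : Equiv.Perm V) (c : Option ℕ) :
    cnt (f ∘ σ) c = cnt f c := by
  unfold cnt
  exact Finset.card_equiv σ (by intro i; simp)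

lemma cnt_eq_one_iff (f : V → Option ℕ) (c : Option ℕ) :
    cnt f c = 1 ↔ ∃! v, f v = c := by
  unfold cnt
  rw [Finset.card_eq_one]
  constructor
  · rintro ⟨a0, ha⟩
    have hmem : ∀ w, f w = c ↔ w = a0 := by
      intro w
      constructor
      · intro hw
        have : w ∈ Finset.univ.filter fun v => f v = c := by simp [hw]
        rw [ha] at this; simpa using this
      · rintro rfl
        have : w ∈ Finset.univ.filter fun v => f v = c := by rw [ha]; simp
        simpa using this
    exact ⟨a0, (hmem a0).2 rfl, fun w hw => (hmem w).1 hw⟩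
  · rintro ⟨v, hv, hu⟩
    refine ⟨v, ?_⟩
    ext w
    simp only [Finset.mem_filter, Finset.mem_univ, true_and, Finset.mem_singleton]
    exact ⟨fun hw => hu w hw, fun h => h ▸ hv⟩

lemma cnt_ne_zero_iff (f : V → Option ℕ) (c : Option ℕ) :
    cnt f c ≠ 0 ↔ ∃ v, f v = c := by
  unfold cnt
  rw [Ne, Finset.card_eq_zero, Finset.filter_eq_empty_iff]
  push_neg
  simp

lemma mem_swappable_iff (f : V → Option ℕ) (c : Option ℕ) :
    c ∈ swappableSet f ↔ cnt f c = 1 ∨ (c = none ∧ cnt f c ≠ 0) := by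
  unfold swappableSet
  rw [Set.mem_setOf_eq, cnt_eq_one_iff, cnt_ne_zero_iff]
  constructor
  · rintro (h | ⟨rfl, h⟩)
    · exact Or.inl h
    · exact Or.inr ⟨rfl, h⟩
  · rintro (h | ⟨rfl, h⟩)
    · exact Or.inl h
    · exact Or.inr ⟨rfl, h⟩

lemma swappable_eq {f g : V → Option ℕ} (h : ∀ c, cnt f c = cnt g c) :
    swappableSet f = swappableSet g :=
  Set.ext fun c => by rw [mem_swappable_iff, mem_swappable_iff, h c]

lemma swappable_comp_perm (f : V → Option ℕ) (σ : Equiv.Perm V) :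
    swappableSet (f ∘ σ) = swappableSet f :=
  swappable_eq fun c => cnt_comp_perm f σ c

omit [Fintype V] in
lemma ne_none_of_not_swappable {f : V → Option ℕ} {v : V}
    (h : f v ∉ swappableSet f) : f v ≠ none :=
  fun hv => h (Or.inr ⟨hv, v, hv⟩)

omit [Fintype V] in
lemma exists_unique_of_swappable {f : V → Option ℕ} {c : Option ℕ}
    (hc : c ∈ swappableSet f) (hne : c ≠ none) : ∃! v, f v = c := by
  rcases hc with h | ⟨rfl, -⟩
  · exact h
  · exact absurd rfl hne

end Counting

section Steps

variable {W : Type*} {G : SimpleGraph W} {k : ℕ}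

lemma step_data [DecidableEq W] {f f' : W → Option ℕ} (h : ExtCSStep G k f f') :
    IsExtColoring G k f ∧ IsExtColoring G k f' ∧
      ∃ u w : W, G.Adj u w ∧ f u ≠ f w ∧ f' = f ∘ Equiv.swap u w := by
  obtain ⟨hf, hf', hne, u, w, hadj, h1, h2, h3⟩ := h
  have heq : f' = f ∘ Equiv.swap u w := by
    funext x
    rcases eq_or_ne x u with rfl | hxu
    · simp [Equiv.swap_apply_left, ← h2]
    rcases eq_or_ne x w with rfl | hxw
    · simp [Equiv.swap_apply_right, ← h1]
    · simp [Equiv.swap_apply_of_ne_of_ne hxu hxw, ← h3 x hxu hxw]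
  refine ⟨hf, hf', u, w, hadj, ?_, heq⟩
  intro huw
  apply hne
  rw [heq]
  funext x
  rcases eq_or_ne x u with rfl | hxu
  · simp [Equiv.swap_apply_left, huw]
  rcases eq_or_ne x w with rfl | hxw
  · simp [Equiv.swap_apply_right, huw]
  · simp [Equiv.swap_apply_of_ne_of_ne hxu hxw]

lemma mk_step [DecidableEq W] {f : W → Option ℕ} {u w : W} (hadj : G.Adj u w) (hne : f u ≠ f w)
    (hf : IsExtColoring G k f) (hf' : IsExtColoring G k (f ∘ Equiv.swap u w)) :
    ExtCSStep G k f (f ∘ Equiv.swap u w) := by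
  refine ⟨hf, hf', ?_, u, w, hadj, by simp, by simp, ?_⟩
  · intro hcon
    apply hne
    have := congrFun hcon u
    simpa using this
  · intro x hxu hxw
    simp [Equiv.swap_apply_of_ne_of_ne hxu hxw]

lemma step_cnt [Fintype W] {f f' : W → Option ℕ} (h : ExtCSStep G k f f') (c : Option ℕ) :
    cnt f' c = cnt f c := by
  classical
  obtain ⟨-, -, u, w, -, -, rfl⟩ := step_data h
  exact cnt_comp_perm f _ c

lemma reconf_cnt [Fintype W] {f f' : W → Option ℕ} (h : ExtReconf G k f f') (c : Option ℕ) :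
    cnt f' c = cnt f c := by
  induction h with
  | refl => rfl
  | tail _ hstep ih => rw [step_cnt hstep c, ih]

end Steps
section Join

variable {V₁ V₂ : Type*} {G₁ : SimpleGraph V₁} {G₂ : SimpleGraph V₂} {k : ℕ}

lemma join_adj_inl_inl {u v : V₁} :
    (graphJoin G₁ G₂).Adj (inl u) (inl v) ↔ G₁.Adj u v := by
  rw [graphJoin, SimpleGraph.fromRel_adj]
  constructor
  · rintro ⟨-, h | h⟩
    · exact h
    · exact h.symm
  · intro h
    exact ⟨by simpa using h.ne, Or.inl h⟩

lemma join_adj_inr_inr {u v : V₂} :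
    (graphJoin G₁ G₂).Adj (inr u) (inr v) ↔ G₂.Adj u v := by
  rw [graphJoin, SimpleGraph.fromRel_adj]
  constructor
  · rintro ⟨-, h | h⟩
    · exact h
    · exact h.symm
  · intro h
    exact ⟨by simpa using h.ne, Or.inl h⟩

lemma join_adj_inl_inr (u : V₁) (v : V₂) :
    (graphJoin G₁ G₂).Adj (inl u) (inr v) := by
  rw [graphJoin, SimpleGraph.fromRel_adj]
  exact ⟨by simp, Or.inl trivial⟩

lemma join_adj_inr_inl (u : V₂) (v : V₁) :
    (graphJoin G₁ G₂).Adj (inr u) (inl v) :=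
  (join_adj_inl_inr v u).symm

lemma starMask_apply {W : Type*} (S : Set (Option ℕ)) (f : W → Option ℕ) (v : W) :
    starMask S f v = if f v ∈ S then none else f v := rfl

lemma starMask_of_mem {W : Type*} {S : Set (Option ℕ)} {f : W → Option ℕ} {v : W}
    (h : f v ∈ S) : starMask S f v = none := by
  rw [starMask_apply, if_pos h]

lemma starMask_of_not_mem {W : Type*} {S : Set (Option ℕ)} {f : W → Option ℕ} {v : W}
    (h : f v ∉ S) : starMask S f v = f v := by
  rw [starMask_apply, if_neg h]

lemma isExt_starMask {W : Type*} (G : SimpleGraph W) (S : Set (Option ℕ))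
    {f : W → Option ℕ}
    (hb : ∀ v i, f v = some i → i ∈ Finset.Icc 1 k)
    (hp : ∀ ⦃u w : W⦄, G.Adj u w → f u = f w → f u = none) :
    IsExtColoring G k (starMask S f) := by
  constructor
  · intro v i hv
    rw [starMask_apply] at hv
    split at hv
    · exact absurd hv (by simp)
    · exact hb v i hv
  · intro u w h huw
    by_cases h1 : f u ∈ S
    · exact starMask_of_mem h1
    · rw [starMask_of_not_mem h1] at huw ⊢
      by_cases h2 : f w ∈ S
      · rw [starMask_of_mem h2] at huw
        exact huw
      · rw [starMask_of_not_mem h2] at huw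
        exact hp h huw

lemma isExt_mask_inl {f : V₁ ⊕ V₂ → Option ℕ} (S : Set (Option ℕ))
    (hf : IsExtColoring (graphJoin G₁ G₂) k f) :
    IsExtColoring G₁ k (starMask S (f ∘ inl)) :=
  isExt_starMask G₁ S (fun v i hv => hf.1 (inl v) i hv)
    (fun u w h huw => hf.2 (join_adj_inl_inl.mpr h) huw)

lemma isExt_mask_inr {f : V₁ ⊕ V₂ → Option ℕ} (S : Set (Option ℕ))
    (hf : IsExtColoring (graphJoin G₁ G₂) k f) :
    IsExtColoring G₂ k (starMask S (f ∘ inr)) :=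
  isExt_starMask G₂ S (fun v i hv => hf.1 (inr v) i hv)
    (fun u w h huw => hf.2 (join_adj_inr_inr.mpr h) huw)

lemma swap_inl_inl [DecidableEq V₁] [DecidableEq (V₁ ⊕ V₂)] (u v x : V₁) :
    Equiv.swap (inl u : V₁ ⊕ V₂) (inl v) (inl x) = inl (Equiv.swap u v x) := by
  rcases eq_or_ne x u with rfl | hxu
  · simp
  rcases eq_or_ne x v with rfl | hxv
  · simp
  rw [Equiv.swap_apply_of_ne_of_ne (by simpa using hxu) (by simpa using hxv),
    Equiv.swap_apply_of_ne_of_ne hxu hxv]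

lemma swap_inl_inr' [DecidableEq (V₁ ⊕ V₂)] (u v : V₁) (y : V₂) :
    Equiv.swap (inl u : V₁ ⊕ V₂) (inl v) (inr y) = inr y :=
  Equiv.swap_apply_of_ne_of_ne (by simp) (by simp)

lemma swap_inr_inr [DecidableEq V₂] [DecidableEq (V₁ ⊕ V₂)] (u v x : V₂) :
    Equiv.swap (inr u : V₁ ⊕ V₂) (inr v) (inr x) = inr (Equiv.swap u v x) := by
  rcases eq_or_ne x u with rfl | hxu
  · simp
  rcases eq_or_ne x v with rfl | hxv
  · simp
  rw [Equiv.swap_apply_of_ne_of_ne (by simpa using hxu) (by simpa using hxv),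
    Equiv.swap_apply_of_ne_of_ne hxu hxv]

lemma swap_inr_inl' [DecidableEq (V₁ ⊕ V₂)] (u v : V₂) (y : V₁) :
    Equiv.swap (inr u : V₁ ⊕ V₂) (inr v) (inl y) = inl y :=
  Equiv.swap_apply_of_ne_of_ne (by simp) (by simp)

end Join

section FreeSwap

variable {W : Type*} {G : SimpleGraph W} {k : ℕ}

lemma proper_swap_free [DecidableEq W] {g : W → Option ℕ}
    (hg : IsExtColoring G k g) {x y : W}
    (hx : g x ∈ swappableSet g) (hy : g y ∈ swappableSet g) :
    IsExtColoring G k (g ∘ Equiv.swap x y) := by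
  constructor
  · intro v i hv
    exact hg.1 (Equiv.swap x y v) i hv
  · intro z w hzw heq
    by_contra hnone
    have hval : g (Equiv.swap x y z) = g (Equiv.swap x y w) := heq
    have hnone' : g (Equiv.swap x y z) ≠ none := hnone
    have hzw' : Equiv.swap x y z ≠ Equiv.swap x y w :=
      fun h => hzw.ne ((Equiv.swap x y).injective h)
    have hS : g (Equiv.swap x y z) ∉ swappableSet g := by
      intro hmem
      obtain ⟨t, -, ht⟩ := exists_unique_of_swappable hmem hnone'
      exact hzw' ((ht _ rfl).trans (ht _ hval.symm).symm)
    have hS' : g (Equiv.swap x y w) ∉ swappableSet g := hval ▸ hS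
    have hzx : z ≠ x := by rintro rfl; rw [Equiv.swap_apply_left] at hS; exact hS hy
    have hzy : z ≠ y := by rintro rfl; rw [Equiv.swap_apply_right] at hS; exact hS hx
    have hwx : w ≠ x := by rintro rfl; rw [Equiv.swap_apply_left] at hS'; exact hS' hy
    have hwy : w ≠ y := by rintro rfl; rw [Equiv.swap_apply_right] at hS'; exact hS' hx
    rw [Equiv.swap_apply_of_ne_of_ne hzx hzy] at hval hnone'
    rw [Equiv.swap_apply_of_ne_of_ne hwx hwy] at hval
    exact hnone' (hg.2 hzw hval)

lemma mk_swap_step [DecidableEq W] {g : W → Option ℕ}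
    (hg : IsExtColoring G k g) {x y : W} (hadj : G.Adj x y)
    (hx : g x ∈ swappableSet g) (hy : g y ∈ swappableSet g) (hne : g x ≠ g y) :
    ExtCSStep G k g (g ∘ Equiv.swap x y) :=
  mk_step hadj hne hg (proper_swap_free hg hx hy)

end FreeSwap
section LiftProject

variable {V₁ V₂ : Type*} [Fintype V₁] [Fintype V₂] [DecidableEq V₁] [DecidableEq V₂]
  {G₁ : SimpleGraph V₁} {G₂ : SimpleGraph V₂} {k : ℕ}

lemma comp_swap_inl (g : V₁ ⊕ V₂ → Option ℕ) (u v : V₁) :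
    (g ∘ Equiv.swap (inl u : V₁ ⊕ V₂) (inl v)) ∘ inl = (g ∘ inl) ∘ Equiv.swap u v :=
  funext fun x => by simp only [Function.comp_apply, swap_inl_inl]

lemma comp_swap_inl_fix (g : V₁ ⊕ V₂ → Option ℕ) (u v : V₁) :
    (g ∘ Equiv.swap (inl u : V₁ ⊕ V₂) (inl v)) ∘ inr = g ∘ inr :=
  funext fun y => by simp only [Function.comp_apply, swap_inl_inr']

lemma comp_swap_inr (g : V₁ ⊕ V₂ → Option ℕ) (u v : V₂) :
    (g ∘ Equiv.swap (inr u : V₁ ⊕ V₂) (inr v)) ∘ inr = (g ∘ inr) ∘ Equiv.swap u v :=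
  funext fun x => by simp only [Function.comp_apply, swap_inr_inr]

lemma comp_swap_inr_fix (g : V₁ ⊕ V₂ → Option ℕ) (u v : V₂) :
    (g ∘ Equiv.swap (inr u : V₁ ⊕ V₂) (inr v)) ∘ inl = g ∘ inl :=
  funext fun y => by simp only [Function.comp_apply, swap_inr_inl']

lemma starMask_comp_swap_eq {W : Type*} [DecidableEq W] {g : W → Option ℕ} {S : Set (Option ℕ)} {x y : W}
    (hx : g x ∈ S) (hy : g y ∈ S) :
    starMask S (g ∘ Equiv.swap x y) = starMask S g := by
  funext v
  rcases eq_or_ne v x with rfl | hvx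
  · rw [starMask_apply, starMask_apply, Function.comp_apply, Equiv.swap_apply_left,
      if_pos hy, if_pos hx]
  rcases eq_or_ne v y with rfl | hvy
  · rw [starMask_apply, starMask_apply, Function.comp_apply, Equiv.swap_apply_right,
      if_pos hx, if_pos hy]
  · rw [starMask_apply, starMask_apply, Function.comp_apply,
      Equiv.swap_apply_of_ne_of_ne hvx hvy]

lemma lift_step₁ {g : V₁ ⊕ V₂ → Option ℕ} {M : V₁ → Option ℕ}
    (hg : IsExtColoring (graphJoin G₁ G₂) k g)
    (hstep : ExtCSStep G₁ k (starMask (swappableSet g) (g ∘ inl)) M) :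
    ∃ g' : V₁ ⊕ V₂ → Option ℕ,
      ExtCSStep (graphJoin G₁ G₂) k g g' ∧ (∀ c, cnt g' c = cnt g c) ∧
        IsExtColoring (graphJoin G₁ G₂) k g' ∧
        starMask (swappableSet g) (g' ∘ inl) = M ∧ g' ∘ inr = g ∘ inr := by
  obtain ⟨hm, hM, u, v, hadj, hmne, hMeq⟩ := step_data hstep
  have hab : g (inl u) ≠ g (inl v) := by
    intro h
    exact hmne (by rw [starMask_apply, starMask_apply, Function.comp_apply,
      Function.comp_apply, h])
  have hmask : starMask (swappableSet g)
      ((g ∘ Equiv.swap (inl u : V₁ ⊕ V₂) (inl v)) ∘ inl) = M := by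
    rw [comp_swap_inl, hMeq]
    rfl
  have hproper : IsExtColoring (graphJoin G₁ G₂) k (g ∘ Equiv.swap (inl u) (inl v)) := by
    constructor
    · intro z i hz
      exact hg.1 _ i hz
    · intro z w hzw heq
      by_contra hnone
      have hval : g (Equiv.swap (inl u : V₁ ⊕ V₂) (inl v) z)
          = g (Equiv.swap (inl u : V₁ ⊕ V₂) (inl v) w) := heq
      have hnone' : g (Equiv.swap (inl u : V₁ ⊕ V₂) (inl v) z) ≠ none := hnone
      have hzw' : Equiv.swap (inl u : V₁ ⊕ V₂) (inl v) z
          ≠ Equiv.swap (inl u : V₁ ⊕ V₂) (inl v) w :=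
        fun h => hzw.ne ((Equiv.swap _ _).injective h)
      have hS : g (Equiv.swap (inl u : V₁ ⊕ V₂) (inl v) z) ∉ swappableSet g := by
        intro hmem
        obtain ⟨t, -, ht⟩ := exists_unique_of_swappable hmem hnone'
        exact hzw' ((ht _ rfl).trans (ht _ hval.symm).symm)
      have hS' : g (Equiv.swap (inl u : V₁ ⊕ V₂) (inl v) w) ∉ swappableSet g := hval ▸ hS
      rcases z with z₁ | z₂ <;> rcases w with w₁ | w₂
      · -- inl, inl : use properness of M
        have hadj₁ : G₁.Adj z₁ w₁ := join_adj_inl_inl.mp hzw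
        have e1 : M z₁ = g (Equiv.swap (inl u : V₁ ⊕ V₂) (inl v) (inl z₁)) := by
          rw [← hmask]
          exact starMask_of_not_mem hS
        have e2 : M w₁ = g (Equiv.swap (inl u : V₁ ⊕ V₂) (inl v) (inl w₁)) := by
          rw [← hmask]
          exact starMask_of_not_mem hS'
        have hMzw : M z₁ = M w₁ := by rw [e1, e2, hval]
        have := hM.2 hadj₁ hMzw
        rw [e1] at this
        exact hnone' this
      · -- inl, inr
        rw [swap_inl_inr'] at hval
        rw [swap_inl_inl] at hval hnone'
        exact hnone' (hg.2 (join_adj_inl_inr _ _) hval)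
      · -- inr, inl
        rw [swap_inl_inr'] at hval
        rw [swap_inl_inl] at hval
        rw [swap_inl_inr'] at hnone'
        exact hnone' (hg.2 (join_adj_inr_inl _ _) hval)
      · -- inr, inr
        rw [swap_inl_inr', swap_inl_inr'] at hval
        rw [swap_inl_inr'] at hnone'
        exact hnone' (hg.2 hzw hval)
  exact ⟨g ∘ Equiv.swap (inl u) (inl v),
    mk_step (join_adj_inl_inl.mpr hadj) hab hg hproper,
    fun c => cnt_comp_perm g _ c, hproper, hmask, comp_swap_inl_fix g u v⟩

lemma lift_step₂ {g : V₁ ⊕ V₂ → Option ℕ} {M : V₂ → Option ℕ}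
    (hg : IsExtColoring (graphJoin G₁ G₂) k g)
    (hstep : ExtCSStep G₂ k (starMask (swappableSet g) (g ∘ inr)) M) :
    ∃ g' : V₁ ⊕ V₂ → Option ℕ,
      ExtCSStep (graphJoin G₁ G₂) k g g' ∧ (∀ c, cnt g' c = cnt g c) ∧
        IsExtColoring (graphJoin G₁ G₂) k g' ∧
        starMask (swappableSet g) (g' ∘ inr) = M ∧ g' ∘ inl = g ∘ inl := by
  obtain ⟨hm, hM, u, v, hadj, hmne, hMeq⟩ := step_data hstep
  have hab : g (inr u) ≠ g (inr v) := by
    intro h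
    exact hmne (by rw [starMask_apply, starMask_apply, Function.comp_apply,
      Function.comp_apply, h])
  have hmask : starMask (swappableSet g)
      ((g ∘ Equiv.swap (inr u : V₁ ⊕ V₂) (inr v)) ∘ inr) = M := by
    rw [comp_swap_inr, hMeq]
    rfl
  have hproper : IsExtColoring (graphJoin G₁ G₂) k (g ∘ Equiv.swap (inr u) (inr v)) := by
    constructor
    · intro z i hz
      exact hg.1 _ i hz
    · intro z w hzw heq
      by_contra hnone
      have hval : g (Equiv.swap (inr u : V₁ ⊕ V₂) (inr v) z)
          = g (Equiv.swap (inr u : V₁ ⊕ V₂) (inr v) w) := heq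
      have hnone' : g (Equiv.swap (inr u : V₁ ⊕ V₂) (inr v) z) ≠ none := hnone
      have hzw' : Equiv.swap (inr u : V₁ ⊕ V₂) (inr v) z
          ≠ Equiv.swap (inr u : V₁ ⊕ V₂) (inr v) w :=
        fun h => hzw.ne ((Equiv.swap _ _).injective h)
      have hS : g (Equiv.swap (inr u : V₁ ⊕ V₂) (inr v) z) ∉ swappableSet g := by
        intro hmem
        obtain ⟨t, -, ht⟩ := exists_unique_of_swappable hmem hnone'
        exact hzw' ((ht _ rfl).trans (ht _ hval.symm).symm)
      have hS' : g (Equiv.swap (inr u : V₁ ⊕ V₂) (inr v) w) ∉ swappableSet g := hval ▸ hS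
      rcases z with z₁ | z₂ <;> rcases w with w₁ | w₂
      · -- inl, inl
        rw [swap_inr_inl', swap_inr_inl'] at hval
        rw [swap_inr_inl'] at hnone'
        exact hnone' (hg.2 hzw hval)
      · -- inl, inr
        rw [swap_inr_inl'] at hval hnone'
        rw [swap_inr_inr] at hval
        exact hnone' (hg.2 (join_adj_inl_inr _ _) hval)
      · -- inr, inl
        rw [swap_inr_inl'] at hval
        rw [swap_inr_inr] at hval hnone'
        exact hnone' (hg.2 (join_adj_inr_inl _ _) hval)
      · -- inr, inr : use properness of M
        have hadj₂ : G₂.Adj z₂ w₂ := join_adj_inr_inr.mp hzw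
        have e1 : M z₂ = g (Equiv.swap (inr u : V₁ ⊕ V₂) (inr v) (inr z₂)) := by
          rw [← hmask]
          exact starMask_of_not_mem hS
        have e2 : M w₂ = g (Equiv.swap (inr u : V₁ ⊕ V₂) (inr v) (inr w₂)) := by
          rw [← hmask]
          exact starMask_of_not_mem hS'
        have hMzw : M z₂ = M w₂ := by rw [e1, e2, hval]
        have := hM.2 hadj₂ hMzw
        rw [e1] at this
        exact hnone' this
  exact ⟨g ∘ Equiv.swap (inr u) (inr v),
    mk_step (join_adj_inr_inr.mpr hadj) hab hg hproper,
    fun c => cnt_comp_perm g _ c, hproper, hmask, comp_swap_inr_fix g u v⟩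

lemma lift₁ {g : V₁ ⊕ V₂ → Option ℕ} {M : V₁ → Option ℕ}
    (hg : IsExtColoring (graphJoin G₁ G₂) k g)
    (h : Relation.ReflTransGen (ExtCSStep G₁ k) (starMask (swappableSet g) (g ∘ inl)) M) :
    ∃ g', ExtReconf (graphJoin G₁ G₂) k g g' ∧ IsExtColoring (graphJoin G₁ G₂) k g' ∧
      (∀ c, cnt g' c = cnt g c) ∧ starMask (swappableSet g) (g' ∘ inl) = M ∧
      g' ∘ inr = g ∘ inr := by
  induction h with
  | refl => exact ⟨g, Relation.ReflTransGen.refl, hg, fun _ => rfl, rfl, rfl⟩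
  | @tail b c hb hbc ih =>
      obtain ⟨g', hre, hg', hcnt, hmask, hinr⟩ := ih
      have hSeq : swappableSet g' = swappableSet g := swappable_eq hcnt
      have hstep' : ExtCSStep G₁ k (starMask (swappableSet g') (g' ∘ inl)) c := by
        rw [hSeq, hmask]; exact hbc
      obtain ⟨g'', hstep'', hcnt'', hg'', hmask'', hinr''⟩ := lift_step₁ hg' hstep'
      refine ⟨g'', hre.tail hstep'', hg'', fun d => (hcnt'' d).trans (hcnt d), ?_, ?_⟩
      · rw [← hSeq]; exact hmask''
      · rw [hinr'', hinr]

lemma lift₂ {g : V₁ ⊕ V₂ → Option ℕ} {M : V₂ → Option ℕ}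
    (hg : IsExtColoring (graphJoin G₁ G₂) k g)
    (h : Relation.ReflTransGen (ExtCSStep G₂ k) (starMask (swappableSet g) (g ∘ inr)) M) :
    ∃ g', ExtReconf (graphJoin G₁ G₂) k g g' ∧ IsExtColoring (graphJoin G₁ G₂) k g' ∧
      (∀ c, cnt g' c = cnt g c) ∧ starMask (swappableSet g) (g' ∘ inr) = M ∧
      g' ∘ inl = g ∘ inl := by
  induction h with
  | refl => exact ⟨g, Relation.ReflTransGen.refl, hg, fun _ => rfl, rfl, rfl⟩
  | @tail b c hb hbc ih =>
      obtain ⟨g', hre, hg', hcnt, hmask, hinl⟩ := ih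
      have hSeq : swappableSet g' = swappableSet g := swappable_eq hcnt
      have hstep' : ExtCSStep G₂ k (starMask (swappableSet g') (g' ∘ inr)) c := by
        rw [hSeq, hmask]; exact hbc
      obtain ⟨g'', hstep'', hcnt'', hg'', hmask'', hinl''⟩ := lift_step₂ hg' hstep'
      refine ⟨g'', hre.tail hstep'', hg'', fun d => (hcnt'' d).trans (hcnt d), ?_, ?_⟩
      · rw [← hSeq]; exact hmask''
      · rw [hinl'', hinl]

end LiftProject
section Project

variable {V₁ V₂ : Type*} [Fintype V₁] [Fintype V₂] [DecidableEq V₁] [DecidableEq V₂]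
  {G₁ : SimpleGraph V₁} {G₂ : SimpleGraph V₂} {k : ℕ}

lemma cross_colors_swappable {g : V₁ ⊕ V₂ → Option ℕ} {u₁ : V₁} {w₂ : V₂}
    (hg : IsExtColoring (graphJoin G₁ G₂) k g)
    (hg' : IsExtColoring (graphJoin G₁ G₂) k (g ∘ Equiv.swap (inl u₁) (inr w₂))) :
    g (inl u₁) ∈ swappableSet g ∧ g (inr w₂) ∈ swappableSet g := by
  constructor
  · rcases hnone : g (inl u₁) with _ | a
    · exact Or.inr ⟨rfl, inl u₁, hnone⟩
    · rw [← hnone]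
      refine Or.inl ⟨inl u₁, rfl, ?_⟩
      rintro (x | y) ht
      · by_contra hne
        have hxne : (inl x : V₁ ⊕ V₂) ≠ inl u₁ := fun h => hne h
        have h1 : (g ∘ Equiv.swap (inl u₁ : V₁ ⊕ V₂) (inr w₂)) (inl x) = g (inl x) := by
          rw [Function.comp_apply, Equiv.swap_apply_of_ne_of_ne hxne (by simp)]
        have h2 : (g ∘ Equiv.swap (inl u₁ : V₁ ⊕ V₂) (inr w₂)) (inr w₂) = g (inl u₁) := by
          rw [Function.comp_apply, Equiv.swap_apply_right]
        have := hg'.2 (join_adj_inl_inr x w₂) (by rw [h1, h2, ht])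
        rw [h1, ht, hnone] at this
        exact absurd this (Option.some_ne_none _)
      · have := hg.2 (join_adj_inl_inr u₁ y) ht.symm
        rw [hnone] at this
        exact absurd this (Option.some_ne_none _)
  · rcases hnone : g (inr w₂) with _ | b
    · exact Or.inr ⟨rfl, inr w₂, hnone⟩
    · rw [← hnone]
      refine Or.inl ⟨inr w₂, rfl, ?_⟩
      rintro (x | y) ht
      · have := hg.2 (join_adj_inl_inr x w₂) ht
        rw [ht, hnone] at this
        exact absurd this (Option.some_ne_none _)
      · by_contra hne
        have hyne : (inr y : V₁ ⊕ V₂) ≠ inr w₂ := fun h => hne h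
        have h1 : (g ∘ Equiv.swap (inl u₁ : V₁ ⊕ V₂) (inr w₂)) (inr y) = g (inr y) := by
          rw [Function.comp_apply, Equiv.swap_apply_of_ne_of_ne (by simp) hyne]
        have h2 : (g ∘ Equiv.swap (inl u₁ : V₁ ⊕ V₂) (inr w₂)) (inl u₁) = g (inr w₂) := by
          rw [Function.comp_apply, Equiv.swap_apply_left]
        have := hg'.2 (join_adj_inl_inr u₁ y) (by rw [h1, h2, ht])
        rw [h2, hnone] at this
        exact absurd this (Option.some_ne_none _)

lemma cross_project {g : V₁ ⊕ V₂ → Option ℕ} {u₁ : V₁} {w₂ : V₂}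
    (hg : IsExtColoring (graphJoin G₁ G₂) k g)
    (hg' : IsExtColoring (graphJoin G₁ G₂) k (g ∘ Equiv.swap (inl u₁) (inr w₂))) :
    starMask (swappableSet g) ((g ∘ Equiv.swap (inl u₁ : V₁ ⊕ V₂) (inr w₂)) ∘ inl)
        = starMask (swappableSet g) (g ∘ inl) ∧
      starMask (swappableSet g) ((g ∘ Equiv.swap (inl u₁ : V₁ ⊕ V₂) (inr w₂)) ∘ inr)
        = starMask (swappableSet g) (g ∘ inr) := by
  obtain ⟨hSa, hSb⟩ := cross_colors_swappable hg hg'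
  constructor
  · funext x
    rcases eq_or_ne x u₁ with rfl | hx
    · rw [starMask_apply, starMask_apply]
      simp only [Function.comp_apply, Equiv.swap_apply_left]
      rw [if_pos hSb, if_pos hSa]
    · rw [starMask_apply, starMask_apply]
      simp only [Function.comp_apply,
        Equiv.swap_apply_of_ne_of_ne (show (inl x : V₁ ⊕ V₂) ≠ inl u₁ by simpa using hx)
          (show (inl x : V₁ ⊕ V₂) ≠ inr w₂ by simp)]
  · funext y
    rcases eq_or_ne y w₂ with rfl | hy
    · rw [starMask_apply, starMask_apply]
      simp only [Function.comp_apply, Equiv.swap_apply_right]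
      rw [if_pos hSa, if_pos hSb]
    · rw [starMask_apply, starMask_apply]
      simp only [Function.comp_apply,
        Equiv.swap_apply_of_ne_of_ne (show (inr y : V₁ ⊕ V₂) ≠ inl u₁ by simp)
          (show (inr y : V₁ ⊕ V₂) ≠ inr w₂ by simpa using hy)]

lemma project_step {g g' : V₁ ⊕ V₂ → Option ℕ}
    (hstep : ExtCSStep (graphJoin G₁ G₂) k g g') :
    (∀ c, cnt g' c = cnt g c) ∧
      Relation.ReflTransGen (ExtCSStep G₁ k)
        (starMask (swappableSet g) (g ∘ inl)) (starMask (swappableSet g) (g' ∘ inl)) ∧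
      Relation.ReflTransGen (ExtCSStep G₂ k)
        (starMask (swappableSet g) (g ∘ inr)) (starMask (swappableSet g) (g' ∘ inr)) := by
  obtain ⟨hg, hg', u, w, hadj, hne, heq⟩ := step_data hstep
  subst heq
  refine ⟨fun c => cnt_comp_perm g _ c, ?_⟩
  rcases u with u₁ | u₂ <;> rcases w with w₁ | w₂
  · -- inl, inl
    have hadj₁ : G₁.Adj u₁ w₁ := join_adj_inl_inl.mp hadj
    constructor
    · rw [comp_swap_inl]
      by_cases hS : g (inl u₁) ∈ swappableSet g ∧ g (inl w₁) ∈ swappableSet g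
      · rw [starMask_comp_swap_eq (g := g ∘ inl) (x := u₁) (y := w₁) hS.1 hS.2]
      · have hmne : starMask (swappableSet g) (g ∘ inl) u₁
            ≠ starMask (swappableSet g) (g ∘ inl) w₁ := by
          by_cases haS : g (inl u₁) ∈ swappableSet g
          · have hbS : g (inl w₁) ∉ swappableSet g := fun hb => hS ⟨haS, hb⟩
            rw [starMask_of_mem (f := g ∘ inl) (v := u₁) haS,
              starMask_of_not_mem (f := g ∘ inl) (v := w₁) hbS]
            exact fun h => ne_none_of_not_swappable hbS h.symm
          · rw [starMask_of_not_mem (f := g ∘ inl) (v := u₁) haS]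
            by_cases hbS : g (inl w₁) ∈ swappableSet g
            · rw [starMask_of_mem (f := g ∘ inl) (v := w₁) hbS]
              exact ne_none_of_not_swappable (f := g) (v := inl u₁) haS
            · rw [starMask_of_not_mem (f := g ∘ inl) (v := w₁) hbS]
              exact hne
        have hprop : IsExtColoring G₁ k
            (starMask (swappableSet g) ((g ∘ inl) ∘ Equiv.swap u₁ w₁)) := by
          rw [← comp_swap_inl]
          exact isExt_mask_inl _ hg'
        exact Relation.ReflTransGen.single (mk_step hadj₁ hmne (isExt_mask_inl _ hg) hprop)
    · rw [comp_swap_inl_fix]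
  · -- inl, inr : cross swap
    obtain ⟨e1, e2⟩ := cross_project hg hg'
    rw [e1, e2]
    exact ⟨Relation.ReflTransGen.refl, Relation.ReflTransGen.refl⟩
  · -- inr, inl : cross swap, reversed
    rw [Equiv.swap_comm] at hg' ⊢
    obtain ⟨e1, e2⟩ := cross_project hg hg'
    rw [e1, e2]
    exact ⟨Relation.ReflTransGen.refl, Relation.ReflTransGen.refl⟩
  · -- inr, inr
    have hadj₂ : G₂.Adj u₂ w₂ := join_adj_inr_inr.mp hadj
    constructor
    · rw [comp_swap_inr_fix]
    · rw [comp_swap_inr]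
      by_cases hS : g (inr u₂) ∈ swappableSet g ∧ g (inr w₂) ∈ swappableSet g
      · rw [starMask_comp_swap_eq (g := g ∘ inr) (x := u₂) (y := w₂) hS.1 hS.2]
      · have hmne : starMask (swappableSet g) (g ∘ inr) u₂
            ≠ starMask (swappableSet g) (g ∘ inr) w₂ := by
          by_cases haS : g (inr u₂) ∈ swappableSet g
          · have hbS : g (inr w₂) ∉ swappableSet g := fun hb => hS ⟨haS, hb⟩
            rw [starMask_of_mem (f := g ∘ inr) (v := u₂) haS,
              starMask_of_not_mem (f := g ∘ inr) (v := w₂) hbS]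
            exact fun h => ne_none_of_not_swappable hbS h.symm
          · rw [starMask_of_not_mem (f := g ∘ inr) (v := u₂) haS]
            by_cases hbS : g (inr w₂) ∈ swappableSet g
            · rw [starMask_of_mem (f := g ∘ inr) (v := w₂) hbS]
              exact ne_none_of_not_swappable (f := g) (v := inr u₂) haS
            · rw [starMask_of_not_mem (f := g ∘ inr) (v := w₂) hbS]
              exact hne
        have hprop : IsExtColoring G₂ k
            (starMask (swappableSet g) ((g ∘ inr) ∘ Equiv.swap u₂ w₂)) := by
          rw [← comp_swap_inr]
          exact isExt_mask_inr _ hg'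
        exact Relation.ReflTransGen.single (mk_step hadj₂ hmne (isExt_mask_inr _ hg) hprop)

lemma forward {fs ft : V₁ ⊕ V₂ → Option ℕ}
    (h : ExtReconf (graphJoin G₁ G₂) k fs ft) :
    (∀ c, cnt ft c = cnt fs c) ∧
      Relation.ReflTransGen (ExtCSStep G₁ k)
        (starMask (swappableSet fs) (fs ∘ inl)) (starMask (swappableSet fs) (ft ∘ inl)) ∧
      Relation.ReflTransGen (ExtCSStep G₂ k)
        (starMask (swappableSet fs) (fs ∘ inr)) (starMask (swappableSet fs) (ft ∘ inr)) := by
  induction h with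
  | refl => exact ⟨fun _ => rfl, Relation.ReflTransGen.refl, Relation.ReflTransGen.refl⟩
  | @tail b c hb hbc ih =>
      obtain ⟨hcnt, h1, h2⟩ := ih
      obtain ⟨hcnt', h1', h2'⟩ := project_step hbc
      have hS : swappableSet b = swappableSet fs := swappable_eq hcnt
      rw [hS] at h1' h2'
      exact ⟨fun d => (hcnt' d).trans (hcnt d), h1.trans h1', h2.trans h2'⟩

end Project
section Route

variable {W : Type*} [Fintype W] [DecidableEq W] {G : SimpleGraph W} {k : ℕ}

lemma reconf_swap_mem {g : W → Option ℕ} (σ : Equiv.Perm W) {x : W}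
    (h : g (σ x) ∈ swappableSet g) : (g ∘ σ) x ∈ swappableSet (g ∘ σ) := by
  rw [swappable_comp_perm]
  exact h

lemma route {g : W → Option ℕ} (hg : IsExtColoring G k g)
    {p q r : W} (hpr : G.Adj p r) (hqr : G.Adj q r)
    (hgp : g p ∈ swappableSet g) (hgq : g q ∈ swappableSet g)
    (hgr : g r ∈ swappableSet g) (hne : g p ≠ g q) :
    ExtReconf G k g (g ∘ Equiv.swap p q) := by
  have hpq : p ≠ q := fun h => hne (by rw [h])
  have hprn : p ≠ r := hpr.ne
  have hqrn : q ≠ r := hqr.ne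
  have hqp : q ≠ p := hpq.symm
  have hrp : r ≠ p := hprn.symm
  have hrq : r ≠ q := hqrn.symm
  by_cases hyx : g r = g p
  · -- swap (q,r) then (p,r)
    have s1 : ExtCSStep G k g (g ∘ Equiv.swap q r) :=
      mk_swap_step hg hqr hgq hgr (fun h => hne (hyx ▸ h.symm))
    have hg₁ : IsExtColoring G k (g ∘ Equiv.swap q r) := s1.2.1
    have e1p : (g ∘ Equiv.swap q r) p = g p := by
      simp [Equiv.swap_apply_of_ne_of_ne hpq hprn]
    have e1r : (g ∘ Equiv.swap q r) r = g q := by simp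
    have s2 : ExtCSStep G k (g ∘ Equiv.swap q r) ((g ∘ Equiv.swap q r) ∘ Equiv.swap p r) :=
      mk_swap_step hg₁ hpr (reconf_swap_mem _ (by rwa [Equiv.swap_apply_of_ne_of_ne hpq hprn]))
        (reconf_swap_mem _ (by rwa [Equiv.swap_apply_right]))
        (by rw [e1p, e1r]; exact hne)
    have hfin : (g ∘ Equiv.swap q r) ∘ Equiv.swap p r = g ∘ Equiv.swap p q := by
      funext v
      rcases eq_or_ne v p with rfl | hvp
      · simp [Equiv.swap_apply_of_ne_of_ne, hrq]
      rcases eq_or_ne v q with rfl | hvq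
      · simp [Equiv.swap_apply_of_ne_of_ne hqp hqrn, hyx]
      rcases eq_or_ne v r with rfl | hvr
      · simp [Equiv.swap_apply_of_ne_of_ne hrp hrq, hyx,
          Equiv.swap_apply_of_ne_of_ne hpq hprn]
      · simp [Equiv.swap_apply_of_ne_of_ne hvp hvr, Equiv.swap_apply_of_ne_of_ne hvq hvr,
          Equiv.swap_apply_of_ne_of_ne hvp hvq]
    rw [← hfin]
    exact (Relation.ReflTransGen.single s1).tail s2
  · by_cases hyc : g r = g q
    · -- swap (p,r) then (q,r)
      have s1 : ExtCSStep G k g (g ∘ Equiv.swap p r) :=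
        mk_swap_step hg hpr hgp hgr (fun h => hyx h.symm)
      have hg₁ : IsExtColoring G k (g ∘ Equiv.swap p r) := s1.2.1
      have s2 : ExtCSStep G k (g ∘ Equiv.swap p r) ((g ∘ Equiv.swap p r) ∘ Equiv.swap q r) :=
        mk_swap_step hg₁ hqr (reconf_swap_mem _ (by rwa [Equiv.swap_apply_of_ne_of_ne hqp hqrn]))
          (reconf_swap_mem _ (by rwa [Equiv.swap_apply_right]))
          (by
            have e1q : (g ∘ Equiv.swap p r) q = g q := by
              simp [Equiv.swap_apply_of_ne_of_ne hqp hqrn]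
            have e1r : (g ∘ Equiv.swap p r) r = g p := by simp
            rw [e1q, e1r]
            exact fun h => hne h.symm)
      have hfin : (g ∘ Equiv.swap p r) ∘ Equiv.swap q r = g ∘ Equiv.swap p q := by
        funext v
        rcases eq_or_ne v p with rfl | hvp
        · simp [Equiv.swap_apply_of_ne_of_ne hpq hprn, hyc]
        rcases eq_or_ne v q with rfl | hvq
        · simp [Equiv.swap_apply_of_ne_of_ne, hqp]
        rcases eq_or_ne v r with rfl | hvr
        · simp [Equiv.swap_apply_of_ne_of_ne hrp hrq, hyc,
            Equiv.swap_apply_of_ne_of_ne hqp hqrn]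
        · simp [Equiv.swap_apply_of_ne_of_ne hvq hvr, Equiv.swap_apply_of_ne_of_ne hvp hvr,
            Equiv.swap_apply_of_ne_of_ne hvp hvq]
      rw [← hfin]
      exact (Relation.ReflTransGen.single s1).tail s2
    · -- swap (p,r), (q,r), (p,r)
      have s1 : ExtCSStep G k g (g ∘ Equiv.swap p r) :=
        mk_swap_step hg hpr hgp hgr (fun h => hyx h.symm)
      have hg₁ : IsExtColoring G k (g ∘ Equiv.swap p r) := s1.2.1
      have e1p : (g ∘ Equiv.swap p r) p = g r := by simp
      have e1q : (g ∘ Equiv.swap p r) q = g q := by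
        simp [Equiv.swap_apply_of_ne_of_ne hqp hqrn]
      have e1r : (g ∘ Equiv.swap p r) r = g p := by simp
      have s2 : ExtCSStep G k (g ∘ Equiv.swap p r) ((g ∘ Equiv.swap p r) ∘ Equiv.swap q r) :=
        mk_swap_step hg₁ hqr (reconf_swap_mem _ (by rwa [Equiv.swap_apply_of_ne_of_ne hqp hqrn]))
          (reconf_swap_mem _ (by rwa [Equiv.swap_apply_right]))
          (by rw [e1q, e1r]; exact fun h => hne h.symm)
      have hg₂ : IsExtColoring G k ((g ∘ Equiv.swap p r) ∘ Equiv.swap q r) := s2.2.1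
      have e2p : ((g ∘ Equiv.swap p r) ∘ Equiv.swap q r) p = g r := by
        have : Equiv.swap q r p = p := Equiv.swap_apply_of_ne_of_ne hpq hprn
        show (g ∘ Equiv.swap p r) (Equiv.swap q r p) = g r
        rw [this, e1p]
      have e2r : ((g ∘ Equiv.swap p r) ∘ Equiv.swap q r) r = g q := by
        show (g ∘ Equiv.swap p r) (Equiv.swap q r r) = g q
        rw [Equiv.swap_apply_right, e1q]
      have s3 : ExtCSStep G k ((g ∘ Equiv.swap p r) ∘ Equiv.swap q r)
          (((g ∘ Equiv.swap p r) ∘ Equiv.swap q r) ∘ Equiv.swap p r) :=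
        mk_swap_step hg₂ hpr
          (by
            rw [swappable_comp_perm, swappable_comp_perm]
            show g (Equiv.swap p r (Equiv.swap q r p)) ∈ swappableSet g
            rw [Equiv.swap_apply_of_ne_of_ne hpq hprn, Equiv.swap_apply_left]
            exact hgr)
          (by
            rw [swappable_comp_perm, swappable_comp_perm]
            show g (Equiv.swap p r (Equiv.swap q r r)) ∈ swappableSet g
            rw [Equiv.swap_apply_right, Equiv.swap_apply_of_ne_of_ne hqp hqrn]
            exact hgq)
          (by rw [e2p, e2r]; exact fun h => hyc h)
      have hfin : (((g ∘ Equiv.swap p r) ∘ Equiv.swap q r) ∘ Equiv.swap p r)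
          = g ∘ Equiv.swap p q := by
        funext v
        simp only [Function.comp_apply]
        rcases eq_or_ne v p with hvp | hvp
        · rw [hvp, Equiv.swap_apply_left, Equiv.swap_apply_right,
            Equiv.swap_apply_of_ne_of_ne hqp hqrn, Equiv.swap_apply_left]
        rcases eq_or_ne v q with hvq | hvq
        · rw [hvq, Equiv.swap_apply_of_ne_of_ne hqp hqrn, Equiv.swap_apply_left,
            Equiv.swap_apply_right, Equiv.swap_apply_right]
        rcases eq_or_ne v r with hvr | hvr
        · rw [hvr, Equiv.swap_apply_right, Equiv.swap_apply_of_ne_of_ne hpq hprn,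
            Equiv.swap_apply_left, Equiv.swap_apply_of_ne_of_ne hrp hrq]
        · rw [Equiv.swap_apply_of_ne_of_ne hvp hvr, Equiv.swap_apply_of_ne_of_ne hvq hvr,
            Equiv.swap_apply_of_ne_of_ne hvp hvr, Equiv.swap_apply_of_ne_of_ne hvp hvq]
      rw [← hfin]
      exact ((Relation.ReflTransGen.single s1).tail s2).tail s3

end Route
section Align

variable {V₁ V₂ : Type*} [Fintype V₁] [Fintype V₂] [DecidableEq V₁] [DecidableEq V₂]
  {G₁ : SimpleGraph V₁} {G₂ : SimpleGraph V₂} {k : ℕ}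

lemma align {h : V₁ ⊕ V₂ → Option ℕ}
    (hh : IsExtColoring (graphJoin G₁ G₂) k h)
    (hpos1 : ∃ v₁, h (inl v₁) ∈ swappableSet h)
    (hpos2 : ∃ v₂, h (inr v₂) ∈ swappableSet h) :
    ∀ n (g : V₁ ⊕ V₂ → Option ℕ),
      (Finset.univ.filter fun v => g v ≠ h v).card = n →
      IsExtColoring (graphJoin G₁ G₂) k g →
      (∀ c, cnt g c = cnt h c) →
      (∀ v, g v ∉ swappableSet h → g v = h v) →
      (∀ v, g v ∈ swappableSet h ↔ h v ∈ swappableSet h) →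
      ExtReconf (graphJoin G₁ G₂) k g h := by
  intro n
  induction n using Nat.strong_induction_on with
  | _ n ih =>
  intro g hcard hg hcnt hoff hmem
  have hSg : swappableSet g = swappableSet h := swappable_eq hcnt
  rcases Finset.eq_empty_or_nonempty (Finset.univ.filter fun v => g v ≠ h v) with he | hnem
  · have hgh : g = h := by
      funext v
      by_contra hv
      have hv' : v ∈ Finset.univ.filter fun w => g w ≠ h w := by simp [hv]
      rw [he] at hv'
      exact absurd hv' (Finset.notMem_empty v)
    rw [hgh]
    exact Relation.ReflTransGen.refl
  · obtain ⟨p, hp⟩ := hnem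
    have hpne : g p ≠ h p := by simpa using hp
    have hgpS : g p ∈ swappableSet h := by
      by_contra hnot
      exact hpne (hoff p hnot)
    have hhpS : h p ∈ swappableSet h := (hmem p).1 hgpS
    have hq : ∃ q, g q = h p ∧ h q ≠ h p := by
      by_contra hcon
      push_neg at hcon
      have hsub : (Finset.univ.filter fun v => g v = h p)
          ⊆ Finset.univ.filter fun v => h v = h p := by
        intro t ht
        simp only [Finset.mem_filter, Finset.mem_univ, true_and] at ht ⊢
        exact hcon t ht
      have heqf := Finset.eq_of_subset_of_card_le hsub (le_of_eq (hcnt (h p)).symm)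
      have hpf : p ∈ Finset.univ.filter fun v => g v = h p := by rw [heqf]; simp
      simp only [Finset.mem_filter, Finset.mem_univ, true_and] at hpf
      exact hpne hpf
    obtain ⟨q, hgq, hhq⟩ := hq
    have hqp : q ≠ p := fun h' => hpne (h' ▸ hgq)
    have hgqS : g q ∈ swappableSet h := hgq ▸ hhpS
    have hneq : g p ≠ g q := fun h' => hpne (h'.trans hgq)
    -- one transposition of swappable colors
    have hreach : ExtReconf (graphJoin G₁ G₂) k g (g ∘ Equiv.swap p q) := by
      have hgpS' : g p ∈ swappableSet g := by rw [hSg]; exact hgpS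
      have hgqS' : g q ∈ swappableSet g := by rw [hSg]; exact hgqS
      rcases p with p₁ | p₂ <;> rcases q with q₁ | q₂
      · obtain ⟨r₂, hr⟩ := hpos2
        have hgrS : g (inr r₂) ∈ swappableSet g := by
          rw [hSg]
          exact (hmem (inr r₂)).2 hr
        exact route hg (join_adj_inl_inr p₁ r₂) (join_adj_inl_inr q₁ r₂)
          hgpS' hgqS' hgrS hneq
      · exact Relation.ReflTransGen.single
          (mk_swap_step hg (join_adj_inl_inr p₁ q₂) hgpS' hgqS' hneq)
      · exact Relation.ReflTransGen.single
          (mk_swap_step hg (join_adj_inr_inl p₂ q₁) hgpS' hgqS' hneq)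
      · obtain ⟨r₁, hr⟩ := hpos1
        have hgrS : g (inl r₁) ∈ swappableSet g := by
          rw [hSg]
          exact (hmem (inl r₁)).2 hr
        exact route hg (join_adj_inr_inl p₂ r₁) (join_adj_inr_inl q₂ r₁)
          hgpS' hgqS' hgrS hneq
    -- invariants for the new coloring
    have hg₂ : IsExtColoring (graphJoin G₁ G₂) k (g ∘ Equiv.swap p q) := by
      have hgpS' : g p ∈ swappableSet g := by rw [hSg]; exact hgpS
      have hgqS' : g q ∈ swappableSet g := by rw [hSg]; exact hgqS
      exact proper_swap_free hg hgpS' hgqS'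
    have hcnt₂ : ∀ c, cnt (g ∘ Equiv.swap p q) c = cnt h c :=
      fun c => (cnt_comp_perm g _ c).trans (hcnt c)
    have ep : (g ∘ Equiv.swap p q) p = g q := by
      simp only [Function.comp_apply, Equiv.swap_apply_left]
    have eq' : (g ∘ Equiv.swap p q) q = g p := by
      simp only [Function.comp_apply, Equiv.swap_apply_right]
    have eo : ∀ v, v ≠ p → v ≠ q → (g ∘ Equiv.swap p q) v = g v := fun v hvp hvq => by
      simp only [Function.comp_apply, Equiv.swap_apply_of_ne_of_ne hvp hvq]
    have hoff₂ : ∀ v, (g ∘ Equiv.swap p q) v ∉ swappableSet h → (g ∘ Equiv.swap p q) v = h v := by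
      intro v hv
      rcases eq_or_ne v p with rfl | hvp
      · rw [ep] at hv
        exact absurd hgqS hv
      rcases eq_or_ne v q with rfl | hvq
      · rw [eq'] at hv
        exact absurd hgpS hv
      · rw [eo v hvp hvq] at hv ⊢
        exact hoff v hv
    have hmem₂ : ∀ v, (g ∘ Equiv.swap p q) v ∈ swappableSet h ↔ h v ∈ swappableSet h := by
      intro v
      rcases eq_or_ne v p with rfl | hvp
      · rw [ep]
        exact iff_of_true hgqS hhpS
      rcases eq_or_ne v q with rfl | hvq
      · rw [eq']
        exact iff_of_true hgpS ((hmem _).1 hgqS)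
      · rw [eo v hvp hvq]
        exact hmem v
    have hsub : (Finset.univ.filter fun v => (g ∘ Equiv.swap p q) v ≠ h v)
        ⊆ (Finset.univ.filter fun v => g v ≠ h v).erase p := by
      intro v hv
      simp only [Finset.mem_filter, Finset.mem_univ, true_and] at hv
      rcases eq_or_ne v p with rfl | hvp
      · rw [ep, hgq] at hv
        exact absurd rfl hv
      rcases eq_or_ne v q with rfl | hvq
      · refine Finset.mem_erase.mpr ⟨hvp, ?_⟩
        simp only [Finset.mem_filter, Finset.mem_univ, true_and]
        rw [hgq]
        exact fun h' => hhq h'.symm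
      · refine Finset.mem_erase.mpr ⟨hvp, ?_⟩
        simp only [Finset.mem_filter, Finset.mem_univ, true_and]
        rw [eo v hvp hvq] at hv
        exact hv
    have hlt : (Finset.univ.filter fun v => (g ∘ Equiv.swap p q) v ≠ h v).card < n := by
      rw [← hcard]
      exact lt_of_le_of_lt (Finset.card_le_card hsub) (Finset.card_erase_lt_of_mem hp)
    exact hreach.trans (ih _ hlt _ rfl hg₂ hcnt₂ hoff₂ hmem₂)

end Align
section Pos

variable {V₁ V₂ : Type*} [Fintype V₁] [Fintype V₂] [DecidableEq V₁] [DecidableEq V₂]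
  {G₁ : SimpleGraph V₁} {G₂ : SimpleGraph V₂} {k : ℕ}

lemma side_pos_inl {f : V₁ ⊕ V₂ → Option ℕ}
    (hf : IsExtColoring (graphJoin G₁ G₂) k f)
    (hne : swappableSet (f ∘ inl) ≠ ∅) : ∃ v, f (inl v) ∈ swappableSet f := by
  obtain ⟨c, hc⟩ := Set.nonempty_iff_ne_empty.mpr hne
  rcases hc with ⟨v, hv, hu⟩ | ⟨rfl, v, hv⟩
  · rcases hcc : c with _ | a
    · subst hcc
      exact ⟨v, Or.inr ⟨hv, inl v, hv⟩⟩
    · refine ⟨v, Or.inl ⟨inl v, rfl, ?_⟩⟩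
      rintro (x | y) ht
      · exact congrArg Sum.inl (hu x (ht.trans hv))
      · have hva : f (inl v) = some a := hcc ▸ hv
        have := hf.2 (join_adj_inl_inr v y) ht.symm
        rw [hva] at this
        exact absurd this (Option.some_ne_none _)
  · exact ⟨v, Or.inr ⟨hv, inl v, hv⟩⟩

lemma side_pos_inr {f : V₁ ⊕ V₂ → Option ℕ}
    (hf : IsExtColoring (graphJoin G₁ G₂) k f)
    (hne : swappableSet (f ∘ inr) ≠ ∅) : ∃ v, f (inr v) ∈ swappableSet f := by
  obtain ⟨c, hc⟩ := Set.nonempty_iff_ne_empty.mpr hne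
  rcases hc with ⟨v, hv, hu⟩ | ⟨rfl, v, hv⟩
  · rcases hcc : c with _ | a
    · subst hcc
      exact ⟨v, Or.inr ⟨hv, inr v, hv⟩⟩
    · refine ⟨v, Or.inl ⟨inr v, rfl, ?_⟩⟩
      rintro (x | y) ht
      · have hva : f (inr v) = some a := hcc ▸ hv
        have := hf.2 (join_adj_inl_inr x v) ht
        rw [ht, hva] at this
        exact absurd this (Option.some_ne_none _)
      · exact congrArg Sum.inr (hu y (ht.trans hv))
  · exact ⟨v, Or.inr ⟨hv, inr v, hv⟩⟩

lemma pos_target {W : Type*} [Fintype W] {G : SimpleGraph W}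
    {f₀ f₁ : W → Option ℕ} {S : Set (Option ℕ)}
    (hstart : ∃ v, f₀ v ∈ S)
    (hR : Relation.ReflTransGen (ExtCSStep G k) (starMask S f₀) (starMask S f₁))
    (hSf : ∀ v, f₁ v = none → (none : Option ℕ) ∈ S) :
    ∃ v, f₁ v ∈ S := by
  obtain ⟨v, hv⟩ := hstart
  have h0 : cnt (starMask S f₀) none ≠ 0 := by
    rw [cnt_ne_zero_iff]
    exact ⟨v, starMask_of_mem hv⟩
  have h1 : cnt (starMask S f₁) none ≠ 0 := by
    rw [reconf_cnt hR none]
    exact h0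
  rw [cnt_ne_zero_iff] at h1
  obtain ⟨w, hw⟩ := h1
  by_cases hft : f₁ w ∈ S
  · exact ⟨w, hft⟩
  · rw [starMask_of_not_mem hft] at hw
    exact ⟨w, by rw [hw]; exact hSf w hw⟩

end Pos
/-- in a join, for a valid instance where both restrictions of
`f_s` have nonempty swappable sets, `f_s` and `f_t` are reconfigurable iff the
starred restrictions `f^j_{s∗}` and `f^j_{t∗}` are reconfigurable on each side. -/
theorem stmt_16 {V₁ V₂ : Type*} [Fintype V₁] [Fintype V₂]
    (G₁ : SimpleGraph V₁) (G₂ : SimpleGraph V₂) (k : ℕ) (hk : 1 ≤ k)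
    (fs ft : V₁ ⊕ V₂ → Option ℕ)
    (hfs : IsExtColoring (graphJoin G₁ G₂) k fs)
    (hft : IsExtColoring (graphJoin G₁ G₂) k ft)
    (hvalid : ∀ c : Option ℕ,
      (Finset.univ.filter fun v => fs v = c).card =
        (Finset.univ.filter fun v => ft v = c).card)
    (hne1 : swappableSet (fs ∘ Sum.inl) ≠ ∅)
    (hne2 : swappableSet (fs ∘ Sum.inr) ≠ ∅) :
    ExtReconf (graphJoin G₁ G₂) k fs ft ↔
      ExtReconf G₁ k (starMask (swappableSet fs) (fs ∘ Sum.inl))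
        (starMask (swappableSet ft) (ft ∘ Sum.inl)) ∧
      ExtReconf G₂ k (starMask (swappableSet fs) (fs ∘ Sum.inr))
        (starMask (swappableSet ft) (ft ∘ Sum.inr)) := by

  classical
  have hvalid' : ∀ c, cnt fs c = cnt ft c := hvalid
  have hSt : swappableSet ft = swappableSet fs := swappable_eq fun c => (hvalid' c).symm
  constructor
  · intro hre
    obtain ⟨hcnt, h1, h2⟩ := forward hre
    rw [hSt]
    exact ⟨h1, h2⟩
  · rintro ⟨R₁, R₂⟩
    rw [hSt] at R₁ R₂
    obtain ⟨g₁, hre1, hg₁, hcnt₁, hmask₁, hinr₁⟩ := lift₁ hfs R₁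
    have hS₁ : swappableSet g₁ = swappableSet fs := swappable_eq hcnt₁
    have R₂' : Relation.ReflTransGen (ExtCSStep G₂ k)
        (starMask (swappableSet g₁) (g₁ ∘ Sum.inr))
        (starMask (swappableSet fs) (ft ∘ Sum.inr)) := by
      rw [hS₁, hinr₁]
      exact R₂
    obtain ⟨g₂, hre2, hg₂, hcnt₂, hmask₂, hinl₂⟩ := lift₂ hg₁ R₂'
    rw [hS₁] at hmask₂
    have hcnt₂' : ∀ c, cnt g₂ c = cnt ft c :=
      fun c => ((hcnt₂ c).trans (hcnt₁ c)).trans (hvalid' c)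
    have hSg₂ : swappableSet g₂ = swappableSet fs :=
      (swappable_eq fun c => (hcnt₂ c).trans (hcnt₁ c))
    have hm1 : starMask (swappableSet fs) (g₂ ∘ Sum.inl)
        = starMask (swappableSet fs) (ft ∘ Sum.inl) := by
      rw [hinl₂]
      exact hmask₁
    have hmv : ∀ v, (if g₂ v ∈ swappableSet fs then none else g₂ v)
        = (if ft v ∈ swappableSet fs then none else ft v) := by
      intro v
      rcases v with x | y
      · exact congrFun hm1 x
      · exact congrFun hmask₂ y
    have hoff₂ : ∀ v, g₂ v ∉ swappableSet ft → g₂ v = ft v := by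
      intro v hv
      have hvS : g₂ v ∉ swappableSet fs := by rwa [hSt] at hv
      have hthis := hmv v
      rw [if_neg hvS] at hthis
      by_cases hftv : ft v ∈ swappableSet fs
      · rw [if_pos hftv] at hthis
        have hmemS : g₂ v ∈ swappableSet fs := by
          rw [hthis, ← hSg₂]
          exact Or.inr ⟨rfl, v, hthis⟩
        exact absurd hmemS hvS
      · rw [if_neg hftv] at hthis
        exact hthis
    have hmem₂ : ∀ v, g₂ v ∈ swappableSet ft ↔ ft v ∈ swappableSet ft := by
      intro v
      rw [hSt]
      constructor
      · intro hvS
        have hthis := hmv v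
        rw [if_pos hvS] at hthis
        by_cases hftv : ft v ∈ swappableSet fs
        · exact hftv
        · rw [if_neg hftv] at hthis
          have h0 : ft v = none := hthis.symm
          have hmemS : ft v ∈ swappableSet ft := by
            rw [h0]
            exact Or.inr ⟨rfl, v, h0⟩
          rw [hSt] at hmemS
          exact absurd hmemS hftv
      · intro hftv
        have hthis := hmv v
        rw [if_pos hftv] at hthis
        by_cases hg2v : g₂ v ∈ swappableSet fs
        · exact hg2v
        · rw [if_neg hg2v] at hthis
          have hmemS : g₂ v ∈ swappableSet g₂ := by
            rw [hthis]
            exact Or.inr ⟨rfl, v, hthis⟩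
          rw [hSg₂] at hmemS
          exact absurd hmemS hg2v
    have hpos1 : ∃ v₁, ft (Sum.inl v₁) ∈ swappableSet ft := by
      have hstart : ∃ v, (fs ∘ Sum.inl) v ∈ swappableSet fs := side_pos_inl hfs hne1
      obtain ⟨v, hv⟩ := pos_target hstart R₁ (fun v hv => by
        rw [← hSt]
        exact Or.inr ⟨rfl, Sum.inl v, hv⟩)
      exact ⟨v, by rw [hSt]; exact hv⟩
    have hpos2 : ∃ v₂, ft (Sum.inr v₂) ∈ swappableSet ft := by
      have hstart : ∃ v, (fs ∘ Sum.inr) v ∈ swappableSet fs := side_pos_inr hfs hne2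
      obtain ⟨v, hv⟩ := pos_target hstart R₂ (fun v hv => by
        rw [← hSt]
        exact Or.inr ⟨rfl, Sum.inr v, hv⟩)
      exact ⟨v, by rw [hSt]; exact hv⟩
    exact hre1.trans (hre2.trans
      (align hft hpos1 hpos2 _ g₂ rfl hg₂ hcnt₂' hoff₂ hmem₂))
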